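/- Chaitin's incompleteness theorem: for any consistent, computably axiomatized formal theory T capable of expressing statements about Kolmogorov complexity, there exists a constant c_T such that T cannot prove any true statement of the form 'K(σ) > c_T' for any specific binary string σ. -/

import Mathlib

open MeasureTheory Filter

abbrev Cantor : Type := ℕ → Bool

/-- The basic cylinder set of sequences extending the finite string `σ`. -/
def cylinder (σ : List Bool) : Set Cantor :=
  {x | ∀ i : Fin σ.length, x i = σ.get i}

/-- A measure on Cantor space is the fair Bernoulli (coin-flipping) measure iff it is a
probability measure giving each cylinder on a string of length `n` measure `2⁻ⁿ`. -/
def IsFairBernoulli (μ : Measure Cantor) : Prop :=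
  IsProbabilityMeasure μ ∧ ∀ σ : List Bool, μ (cylinder σ) = (2 : ENNReal)⁻¹ ^ σ.length

def PrefixFreeSet (D : Set (List Bool)) : Prop :=
  ∀ p ∈ D, ∀ q ∈ D, p <+: q → p = q

/-- A prefix(-free) machine: a partial computable map on binary strings with prefix-free domain. -/
def IsPrefixMachine (M : List Bool →. List Bool) : Prop :=
  Partrec M ∧ PrefixFreeSet {p | (M p).Dom}

/-- Kolmogorov complexity of `σ` relative to the machine `M` (valued in `ℕ∞`). -/
noncomputable def Kc (M : List Bool →. List Bool) (σ : List Bool) : ℕ∞ :=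
  sInf {n : ℕ∞ | ∃ p : List Bool, (p.length : ℕ∞) = n ∧ σ ∈ M p}

/-- A universal prefix machine: a prefix machine minimizing complexity up to additive constants. -/
def IsUniversalPrefixMachine (U : List Bool →. List Bool) : Prop :=
  IsPrefixMachine U ∧ ∀ M : List Bool →. List Bool, IsPrefixMachine M →
    ∃ c : ℕ, ∀ σ : List Bool, Kc U σ ≤ Kc M σ + (c : ℕ∞)

/-- The length-`n` prefix of an infinite binary sequence. -/
def prefixOf (x : Cantor) (n : ℕ) : List Bool := List.ofFn fun i : Fin n => x i

/-- Martin-Löf (1-)randomness, via the Levin–Schnorr complexity characterization: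
`K(x↾n) ≥ n - c` for all `n`. -/
def OneRandom (U : List Bool →. List Bool) (x : Cantor) : Prop :=
  ∃ c : ℕ, ∀ n : ℕ, (n : ℕ∞) ≤ Kc U (prefixOf x n) + (c : ℕ∞)

/-- A predicate is computably enumerable if it is the domain of a partial computable function. -/
def CEPred {α : Type} [Primcodable α] (p : α → Prop) : Prop :=
  ∃ f : α →. Unit, Partrec f ∧ ∀ a, p a ↔ (f a).Dom

section ChaitinAux

open Nat.Partrec (Code)
open Nat.Partrec.Code Encodable

/-- The program `0^n 1`. -/
def mkprog : ℕ → List Bool :=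
  Nat.rec [true] fun _ ih => false :: ih

lemma mkprog_length (n : ℕ) : (mkprog n).length = n + 1 := by
  induction n with
  | zero => rfl
  | succ n ih => simpa [mkprog] using ih

lemma mkprog_getElem_lt {n i : ℕ} (h : i < n) :
    (mkprog n)[i]'(by rw [mkprog_length]; omega) = false := by
  induction n generalizing i with
  | zero => omega
  | succ n ih =>
    cases i with
    | zero => rfl
    | succ i => simpa [mkprog] using ih (by omega)

lemma mkprog_getElem_self (n : ℕ) :
    (mkprog n)[n]'(by rw [mkprog_length]; omega) = true := by
  induction n with
  | zero => rfl
  | succ n ih => simpa [mkprog] using ih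

lemma mkprog_prefix {a b : ℕ} (h : mkprog a <+: mkprog b) : a = b := by
  have hlen : a + 1 ≤ b + 1 := by
    have := h.length_le; rwa [mkprog_length, mkprog_length] at this
  by_contra hne
  have hab : a < b := by omega
  have h1 : (mkprog a)[a]'(by rw [mkprog_length]; omega) =
      (mkprog b)[a]'(by rw [mkprog_length]; omega) := h.getElem _
  rw [mkprog_getElem_self, mkprog_getElem_lt hab] at h1
  simp at h1

lemma mkprog_primrec : Primrec mkprog :=
  Primrec.nat_rec₁ [true] (Primrec.list_cons.comp (Primrec.const false) Primrec.snd)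

/-- The search function underlying Chaitin's machine. -/
def chG (cf : Code) (x : List Bool × ℕ) : Option (List Bool) :=
  (decode (α := List Bool × ℕ) x.2.unpair.2).bind fun a =>
    if x.1 = mkprog (x.1.length - 1) ∧ 2 * (x.1.length - 1) ≤ a.2 ∧
        (evaln x.2.unpair.1 cf (encode a)).isSome = true
    then some a.1 else none

lemma chG_primrec (cf : Code) : Primrec (chG cf) := by
  apply Primrec.option_bind
  · exact Primrec.decode.comp (Primrec.snd.comp (Primrec.unpair.comp Primrec.snd))
  · apply Primrec.ite
    · apply PrimrecPred.and
      · exact PrimrecRel.comp Primrec.eq (Primrec.fst.comp Primrec.fst)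
          (mkprog_primrec.comp <| Primrec.nat_sub.comp
            (Primrec.list_length.comp (Primrec.fst.comp Primrec.fst)) (Primrec.const 1))
      apply PrimrecPred.and
      · exact PrimrecRel.comp Primrec.nat_le
          (Primrec.nat_mul.comp (Primrec.const 2) <| Primrec.nat_sub.comp
            (Primrec.list_length.comp (Primrec.fst.comp Primrec.fst)) (Primrec.const 1))
          (Primrec.snd.comp Primrec.snd)
      · exact PrimrecRel.comp Primrec.eq
          (Primrec.option_isSome.comp <| primrec_evaln.comp <|
            Primrec.pair
              (Primrec.pair
                (Primrec.fst.comp (Primrec.unpair.comp (Primrec.snd.comp Primrec.fst)))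
                (Primrec.const cf))
              (Primrec.encode.comp Primrec.snd))
          (Primrec.const true)
    · exact Primrec.option_some.comp (Primrec.fst.comp Primrec.snd)
    · exact Primrec.const none

/-- Chaitin's machine. -/
def chM (cf : Code) : List Bool →. List Bool := fun p => Nat.rfindOpt fun k => chG cf (p, k)

lemma chM_partrec (cf : Code) : Partrec (chM cf) :=
  Partrec.rfindOpt ((chG_primrec cf).to_comp.to₂)

lemma chM_mem {cf : Code} {p σ : List Bool} (h : σ ∈ chM cf p) :
    ∃ a : List Bool × ℕ, σ = a.1 ∧ p = mkprog (p.length - 1) ∧ 2 * (p.length - 1) ≤ a.2 ∧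
      (∃ x, x ∈ eval cf (encode a)) := by
  obtain ⟨k, hk⟩ := Nat.rfindOpt_spec h
  simp only [chG, Option.mem_def, Option.bind_eq_some_iff] at hk
  obtain ⟨a, _, ha⟩ := hk
  split at ha
  · next hcond =>
    obtain ⟨h1, h2, h3⟩ := hcond
    obtain ⟨x, hx⟩ := Option.isSome_iff_exists.1 h3
    exact ⟨a, (Option.some_inj.1 ha).symm, h1, h2, x, evaln_sound hx⟩
  · exact absurd ha (by simp)

lemma chM_dom {cf : Code} {p : List Bool} (h : (chM cf p).Dom) :
    p = mkprog (p.length - 1) := by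
  obtain ⟨_, _, h1, _, _⟩ := chM_mem (Part.get_mem h)
  exact h1

lemma chM_prefixMachine (cf : Code) : IsPrefixMachine (chM cf) := by
  refine ⟨chM_partrec cf, fun p hp q hq hpq => ?_⟩
  rw [chM_dom hp, chM_dom hq] at *
  rw [mkprog_prefix hpq]

end ChaitinAux

/-- Chaitin's incompleteness theorem. For any consistent, computably
axiomatized theory `T` (formalized by the c.e. set of pairs `(σ, c)` such that `T` proves
`K(σ) > c`, all such provable statements being true), there is a constant `c_T` such that
`T` proves no statement `K(σ) > c` with `c ≥ c_T`. -/
theorem chaitin_incompleteness (U : List Bool →. List Bool)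
    (hU : IsUniversalPrefixMachine U)
    (Provable : List Bool × ℕ → Prop) (hce : CEPred Provable)
    (hsound : ∀ (σ : List Bool) (c : ℕ), Provable (σ, c) → (c : ℕ∞) < Kc U σ) :
    ∃ cT : ℕ, ∀ (σ : List Bool) (c : ℕ), cT ≤ c → ¬ Provable (σ, c) := by
  obtain ⟨f, hf, hfd⟩ := hce
  obtain ⟨cf, ecf⟩ := Nat.Partrec.Code.exists_code.1 hf
  obtain ⟨c₀, hc₀⟩ := hU.2 _ (chM_prefixMachine cf)
  refine ⟨2 * (c₀ + 1), fun σ c hc hp => ?_⟩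
  set n := c₀ + 1 with hn
  have hfdom : (f (σ, c)).Dom := (hfd _).1 hp
  have hev : ∃ x, x ∈ Nat.Partrec.Code.eval cf (Encodable.encode (σ, c)) := by
    rw [ecf]
    refine Part.dom_iff_mem.1 ?_
    simpa [Encodable.encodek] using hfdom
  obtain ⟨x, hx⟩ := hev
  obtain ⟨s, hs⟩ := Nat.Partrec.Code.evaln_complete.1 hx
  have hdom : (chM cf (mkprog n)).Dom := by
    rw [chM, Nat.rfindOpt_dom]
    refine ⟨Nat.pair s (Encodable.encode (σ, c)), σ, ?_⟩
    simp only [chG, Nat.unpair_pair, Encodable.encodek, Option.bind_some]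
    rw [if_pos]
    · rfl
    · refine ⟨by simp [mkprog_length], by rw [mkprog_length]; omega,
        Option.isSome_iff_exists.2 ⟨x, hs⟩⟩
  obtain ⟨a, ha1, _, ha2, y, hy⟩ := chM_mem (Part.get_mem hdom)
  have hpa : Provable a := by
    rw [hfd]
    have hd : (Nat.Partrec.Code.eval cf (Encodable.encode a)).Dom := Part.dom_iff_mem.2 ⟨y, hy⟩
    rw [ecf] at hd
    simpa [Encodable.encodek] using hd
  have hKlt : (a.2 : ℕ∞) < Kc U a.1 := hsound a.1 a.2 (by rwa [← Prod.mk.eta (p := a)] at hpa)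
  have hKM : Kc (chM cf) a.1 ≤ ((n + 1 : ℕ) : ℕ∞) :=
    sInf_le ⟨mkprog n, by rw [mkprog_length], ha1 ▸ Part.get_mem hdom⟩
  have hchain : Kc U a.1 ≤ ((2 * n : ℕ) : ℕ∞) := by
    calc Kc U a.1 ≤ Kc (chM cf) a.1 + (c₀ : ℕ∞) := hc₀ a.1
    _ ≤ ((n + 1 : ℕ) : ℕ∞) + (c₀ : ℕ∞) := add_le_add_left hKM _
    _ = ((2 * n : ℕ) : ℕ∞) := by rw [← Nat.cast_add]; congr 1; omega
  have h2n : ((2 * n : ℕ) : ℕ∞) ≤ (a.2 : ℕ∞) := by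
    rw [mkprog_length] at ha2
    exact_mod_cast (by simpa using ha2 : 2 * n ≤ a.2)
  exact absurd (h2n.trans_lt (hKlt.trans_le hchain)) (lt_irrefl _)
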